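/- Let (L,⋆) be a left Leibniz algebra over a field K of characteristic zero, i.e. ⋆ is bilinear and x⋆(y⋆z) = (x⋆y)⋆z + y⋆(x⋆z) for all x,y,z in L. Define [x,y] := x⋆y - y⋆x and {x,y,z} := -(x⋆y)⋆z for all x,y,z in L. Then (L,[-,-],{-,-,-}) is a Lie-Yamaguti algebra. -/
import Mathlib


/-- The binary bracket associated to a Leibniz algebra: `[x,y] := x⋆y - y⋆x`. -/
def brL {K L : Type*} [Field K] [AddCommGroup L] [Module K L]
    (mul : L →ₗ[K] L →ₗ[K] L) (x y : L) : L := mul x y - mul y x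

/-- The ternary bracket associated to a Leibniz algebra: `{x,y,z} := -(x⋆y)⋆z`. -/
def trL {K L : Type*} [Field K] [AddCommGroup L] [Module K L]
    (mul : L →ₗ[K] L →ₗ[K] L) (x y z : L) : L := -(mul (mul x y) z)

/-- A (left) Leibniz algebra `(L,⋆)` with `[x,y] := x⋆y - y⋆x` and
`{x,y,z} := -(x⋆y)⋆z` is a Lie-Yamaguti algebra: (LY1)-(LY6) hold. -/
theorem leibniz_isLieYamaguti (K L : Type*) [Field K] [CharZero K]
    [AddCommGroup L] [Module K L] (mul : L →ₗ[K] L →ₗ[K] L)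
    (hleib : ∀ x y z, mul x (mul y z) = mul (mul x y) z + mul y (mul x z)) :
    (∀ x y, brL mul x y = - brL mul y x) ∧
    (∀ x y z, trL mul x y z = - trL mul y x z) ∧
    (∀ x y z,
      brL mul (brL mul x y) z + brL mul (brL mul y z) x + brL mul (brL mul z x) y
        + trL mul x y z + trL mul y z x + trL mul z x y = 0) ∧
    (∀ x y z a,
      trL mul (brL mul x y) z a + trL mul (brL mul z x) y a
        + trL mul (brL mul y z) x a = 0) ∧
    (∀ a b x y,
      trL mul a b (brL mul x y) = brL mul (trL mul a b x) y + brL mul x (trL mul a b y)) ∧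
    (∀ a b x y z,
      trL mul a b (trL mul x y z)
        = trL mul (trL mul a b x) y z + trL mul x (trL mul a b y) z
          + trL mul x y (trL mul a b z)) := by
  have h' : ∀ x y z, mul (mul x y) z = mul x (mul y z) - mul y (mul x z) := by
    intro x y z; rw [hleib x y z]; abel
  refine ⟨?_, ?_, ?_, ?_, ?_, ?_⟩ <;> intros <;>
    simp only [brL, trL, map_sub, map_neg, LinearMap.sub_apply, LinearMap.neg_apply, h'] <;>
    abel
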